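/- For every z ∈ ℂ with |z| ≤ 1, every f ∈ C^k([0,1]) and every x ∈ (0,1), all the series below converge absolutely and the identity (1 − Q_w(z))((1 − z·L_{0,v})f)(x) = f(x) − z·(L_v f)(x) holds, where L_{0,v}f := (e^v·f)∘ψ_0, L_{1,v}f := (e^v·f)∘ψ_1, L_v := L_{0,v} + L_{1,v}, and (Q_w(z)g)(x) := Σ_{n≥1} z^n e^{w(φ_n(x))} g(φ_n(x)). -/

import Mathlib

open Set Filter Topology Asymptotics MeasureTheory

noncomputable section

/-- The first passage time of `x` to the interval `(a,1)` under iteration of `T`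
(`τ(x) = min {n ≥ 0 : Tⁿ x ∈ (a,1)}`). -/
def tau (T : ℝ → ℝ) (a : ℝ) (x : ℝ) : ℕ := sInf {n : ℕ | T^[n] x ∈ Set.Ioo a 1}

/-- The jump transformation `G(x) = T^{1+τ(x)}(x)` of `T` on `(a,1)`. -/
def Gmap (T : ℝ → ℝ) (a : ℝ) (x : ℝ) : ℝ := T^[1 + tau T a x] x

/-- The sequence `a₀ = 1`, `a₁ = a`, `a_ℓ = ψ₀(a_{ℓ-1})`. -/
def aseq (ψ₀ : ℝ → ℝ) (a : ℝ) : ℕ → ℝ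
  | 0 => 1
  | 1 => a
  | n + 2 => ψ₀ (aseq ψ₀ a (n + 1))

/-- The level sets `A_ℓ = (a_ℓ, a_{ℓ-1})` of the first passage function. -/
def Aset (ψ₀ : ℝ → ℝ) (a : ℝ) (ℓ : ℕ) : Set ℝ := Set.Ioo (aseq ψ₀ a ℓ) (aseq ψ₀ a (ℓ - 1))

/-- The inverse branches `φ_ℓ = ψ₀^{ℓ-1} ∘ ψ₁` of the jump transformation. -/
def phib (ψ₀ ψ₁ : ℝ → ℝ) (ℓ : ℕ) : ℝ → ℝ := ψ₀^[ℓ - 1] ∘ ψ₁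

/-- The induced potential `w(x) = ∑_{j=0}^{τ(x)} v(Tʲ x)`. -/
def indw (T : ℝ → ℝ) (a : ℝ) (v : ℝ → ℝ) (x : ℝ) : ℝ :=
  ∑ j ∈ Finset.range (tau T a x + 1), v (T^[j] x)

/-- The `C^h` norm `‖f‖_h = max_{0 ≤ j ≤ h} sup_{[0,1]} |f^{(j)}|` of a function on `[0,1]`
(computed via the open interval `(0,1)`). -/
noncomputable def nrm {E : Type*} [NormedAddCommGroup E] [NormedSpace ℝ E]
    (h : ℕ) (f : ℝ → E) : ℝ :=
  (Finset.range (h + 1)).sup' Finset.nonempty_range_add_one fun j =>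
    sSup ((fun x => ‖iteratedDerivWithin j f (Set.Ioo (0 : ℝ) 1) x‖) '' Set.Ioo (0 : ℝ) 1)

/-- Hypotheses (H1)–(H5) on the parabolic map `T`. -/
structure Hyp (T : ℝ → ℝ) (a : ℝ) (ψ₀ ψ₁ : ℝ → ℝ) (r : ℕ∞) (c α ε ρ : ℝ) : Prop where
  ha : a ∈ Set.Ioo (0 : ℝ) 1
  hmaps : Set.MapsTo T (Set.Icc 0 1) (Set.Icc 0 1)
  mono0 : StrictMonoOn T (Set.Ioo 0 a)
  mono1 : StrictMonoOn T (Set.Ioo a 1) ∨ StrictAntiOn T (Set.Ioo a 1)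
  full0 : closure (T '' Set.Ioo 0 a) = Set.Icc 0 1
  full1 : closure (T '' Set.Ioo a 1) = Set.Icc 0 1
  hr : 2 ≤ r
  smooth0 : ContDiffOn ℝ r T (Set.Ioc 0 a)
  smooth1 : ContDiffOn ℝ r T (Set.Icc a 1)
  inv0 : ∀ y ∈ Set.Ioo (0 : ℝ) 1, ψ₀ y ∈ Set.Ioo 0 a ∧ T (ψ₀ y) = y
  inv0' : ∀ x ∈ Set.Ioo 0 a, ψ₀ (T x) = x
  inv1 : ∀ y ∈ Set.Ioo (0 : ℝ) 1, ψ₁ y ∈ Set.Ioo a 1 ∧ T (ψ₁ y) = y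
  inv1' : ∀ x ∈ Set.Ioo a 1, ψ₁ (T x) = x
  hc : 0 < c
  hα : 0 < α
  fix0 : T 0 = 0
  dT0 : derivWithin T (Set.Icc 0 1) 0 = 1
  asymp : Filter.Tendsto (fun x => (deriv T x - 1) / (c * x ^ α)) (nhdsWithin 0 (Set.Ioi 0)) (nhds 1)
  hε : 0 < ε
  hρ : 1 < ρ
  dmono : StrictMonoOn (deriv T) (Set.Ioo 0 ε)
  expand : ∀ x ∈ Set.Ico ε a ∪ Set.Ioo a 1, ρ ≤ |deriv T x|

/-- Hypothesis (H6) on the potential `v`: it is `C^k` on each branch interval and extends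
to a `C^k` function on `[0,a]` and on `[a,1]`; `v 0` is declared to be the value at `0`
of the extension to `[0,a]`. -/
structure HypV (a : ℝ) (v : ℝ → ℝ) (k : ℕ∞) : Prop where
  ext0 : ∃ v0 : ℝ → ℝ, ContDiffOn ℝ k v0 (Set.Icc 0 a) ∧ Set.EqOn v v0 (Set.Ioo 0 a) ∧ v 0 = v0 0
  ext1 : ∃ v1 : ℝ → ℝ, ContDiffOn ℝ k v1 (Set.Icc a 1) ∧ Set.EqOn v v1 (Set.Ioo a 1)

/-- Hypothesis (H7): `∑_n ‖e^{w∘φ_n}‖_h (1 + ‖φ_n‖_h^h) ≤ c_k` for all `h ≤ k`. -/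
def H7 (T : ℝ → ℝ) (a : ℝ) (ψ₀ ψ₁ v : ℝ → ℝ) (k : ℕ) (ck : ℝ) : Prop :=
  ∀ h : ℕ, h ≤ k →
    Summable (fun n : ℕ =>
      nrm h (fun x => Real.exp (indw T a v (phib ψ₀ ψ₁ (n + 1) x))) *
        (1 + nrm h (phib ψ₀ ψ₁ (n + 1)) ^ h)) ∧
    (∑' n : ℕ,
      nrm h (fun x => Real.exp (indw T a v (phib ψ₀ ψ₁ (n + 1) x))) *
        (1 + nrm h (phib ψ₀ ψ₁ (n + 1)) ^ h)) ≤ ck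

/-- Composition `φ_β = φ_{β₁} ∘ ⋯ ∘ φ_{β_m}` along a list `β` of branch indices. -/
def phibList (ψ₀ ψ₁ : ℝ → ℝ) : List ℕ → ℝ → ℝ
  | [], x => x
  | n :: l, x => phib ψ₀ ψ₁ n (phibList ψ₀ ψ₁ l x)

/-- The weight `W_β(x) = exp (∑_{j=1}^m w(φ_{β_j  … β_m}(x)))`. -/
def Wb (T : ℝ → ℝ) (a : ℝ) (ψ₀ ψ₁ v : ℝ → ℝ) : List ℕ → ℝ → ℝ
  | [], _ => 1
  | n :: l, x =>
      Real.exp (indw T a v (phib ψ₀ ψ₁ n (phibList ψ₀ ψ₁ l x))) * Wb T a ψ₀ ψ₁ v l x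

/-- `Λ_m(z) = sup_{x ∈ (0,1)} ∑_{β ∈ ℕ_{≥1}^m} |z|^{|β|} W_β(x)`, as a function of `|z|`. -/
noncomputable def Lam (T : ℝ → ℝ) (a : ℝ) (ψ₀ ψ₁ v : ℝ → ℝ) (m : ℕ) (zn : ℝ) : ℝ :=
  sSup ((fun x => ∑' β : Fin m → ℕ,
      zn ^ (m + ∑ i, β i) * Wb T a ψ₀ ψ₁ v (List.ofFn fun i => β i + 1) x) '' Set.Ioo (0 : ℝ) 1)


section AuxLemmas

variable {T : ℝ → ℝ} {a : ℝ} {ψ₀ ψ₁ : ℝ → ℝ} {r : ℕ∞} {c α ε ρ : ℝ} {v : ℝ → ℝ} {y : ℝ}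

lemma aux_mem (hT : Hyp T a ψ₀ ψ₁ r c α ε ρ) (hy : y ∈ Set.Ioo (0:ℝ) 1) (m : ℕ) :
    ψ₀^[m] (ψ₁ y) ∈ Set.Ioo (0:ℝ) 1 ∧ (1 ≤ m → ψ₀^[m] (ψ₁ y) ∈ Set.Ioo 0 a) := by
  induction m with
  | zero =>
    have h1 := (hT.inv1 y hy).1
    exact ⟨⟨hT.ha.1.trans h1.1, h1.2⟩, fun h => absurd h (by omega)⟩
  | succ n ih =>
    have h0 := (hT.inv0 _ ih.1).1
    rw [Function.iterate_succ_apply']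
    exact ⟨⟨h0.1, h0.2.trans hT.ha.2⟩, fun _ => h0⟩

lemma aux_T (hT : Hyp T a ψ₀ ψ₁ r c α ε ρ) (hy : y ∈ Set.Ioo (0:ℝ) 1) (m : ℕ) :
    T (ψ₀^[m+1] (ψ₁ y)) = ψ₀^[m] (ψ₁ y) := by
  rw [Function.iterate_succ_apply']
  exact (hT.inv0 _ (aux_mem hT hy m).1).2

lemma aux_Tj (hT : Hyp T a ψ₀ ψ₁ r c α ε ρ) (hy : y ∈ Set.Ioo (0:ℝ) 1) :
    ∀ j m : ℕ, j ≤ m → T^[j] (ψ₀^[m] (ψ₁ y)) = ψ₀^[m-j] (ψ₁ y) := by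
  intro j
  induction j with
  | zero => intro m _; simp
  | succ n ih =>
    intro m h
    rw [Function.iterate_succ_apply', ih m (by omega)]
    have h2 : m - n = (m - (n+1)) + 1 := by omega
    rw [h2, aux_T hT hy]

lemma aux_tau (hT : Hyp T a ψ₀ ψ₁ r c α ε ρ) (hy : y ∈ Set.Ioo (0:ℝ) 1) (m : ℕ) :
    tau T a (ψ₀^[m] (ψ₁ y)) = m := by
  have hmem : m ∈ {n : ℕ | T^[n] (ψ₀^[m] (ψ₁ y)) ∈ Set.Ioo a 1} := by
    rw [Set.mem_setOf_eq, aux_Tj hT hy m m le_rfl]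
    simpa using (hT.inv1 y hy).1
  unfold tau
  apply le_antisymm
  · exact Nat.sInf_le hmem
  · refine le_csInf ⟨m, hmem⟩ ?_
    intro j hj
    by_contra h
    push_neg at h
    rw [Set.mem_setOf_eq, aux_Tj hT hy j m h.le] at hj
    have h2 := (aux_mem hT hy (m - j)).2 (by omega)
    exact absurd hj.1 (not_lt.2 h2.2.le)

lemma aux_indw0 (hT : Hyp T a ψ₀ ψ₁ r c α ε ρ) (hy : y ∈ Set.Ioo (0:ℝ) 1) :
    indw T a v (ψ₁ y) = v (ψ₁ y) := by
  have h := aux_tau hT hy 0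
  simp only [Function.iterate_zero_apply] at h
  simp [indw, h]

lemma aux_indw_rec (hT : Hyp T a ψ₀ ψ₁ r c α ε ρ) (hy : y ∈ Set.Ioo (0:ℝ) 1) (m : ℕ) :
    indw T a v (ψ₀^[m+1] (ψ₁ y)) = v (ψ₀^[m+1] (ψ₁ y)) + indw T a v (ψ₀^[m] (ψ₁ y)) := by
  unfold indw
  rw [aux_tau hT hy (m+1), aux_tau hT hy m, Finset.sum_range_succ']
  simp only [Function.iterate_zero_apply]
  rw [add_comm]
  congr 1
  refine Finset.sum_congr rfl fun j _ => ?_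
  rw [Function.iterate_succ_apply, aux_T hT hy m]

lemma aux_indw_le (hT : Hyp T a ψ₀ ψ₁ r c α ε ρ) (hy : y ∈ Set.Ioo (0:ℝ) 1) {Mv : ℝ}
    (hMv0 : ∀ t ∈ Set.Ioo 0 a, |v t| ≤ Mv) (hMv1 : ∀ t ∈ Set.Ioo a 1, |v t| ≤ Mv) (m : ℕ) :
    indw T a v (ψ₀^[m] (ψ₁ y)) ≤ (m+1) * Mv := by
  unfold indw
  rw [aux_tau hT hy m]
  calc ∑ j ∈ Finset.range (m+1), v (T^[j] (ψ₀^[m] (ψ₁ y)))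
      ≤ ∑ _j ∈ Finset.range (m+1), Mv := by
        refine Finset.sum_le_sum fun j hj => ?_
        rw [Finset.mem_range] at hj
        rw [aux_Tj hT hy j m (by omega)]
        by_cases hjm : j = m
        · subst hjm
          simp only [Nat.sub_self, Function.iterate_zero_apply]
          exact le_trans (le_abs_self _) (hMv1 _ (hT.inv1 y hy).1)
        · have h2 := (aux_mem hT hy (m-j)).2 (by omega)
          exact le_trans (le_abs_self _) (hMv0 _ h2)
    _ = (m+1) * Mv := by
        rw [Finset.sum_const, Finset.card_range, nsmul_eq_mul]
        push_cast
        ring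

end AuxLemmas

/-- The operator identity `(1 - Q_w(z))(1 - z L_{0,v}) = 1 - z L_v` of equation (4.2),
pointwise on `(0,1)`: for `|z| ≤ 1`, `f ∈ C^k([0,1])` and `x ∈ (0,1)`, the series converge
absolutely and `(1 - Q_w(z))((1 - z L_{0,v})f)(x) = f(x) - z (L_v f)(x)`, where
`L_{0,v} f = (e^v f) ∘ ψ₀`, `L_{1,v} f = (e^v f) ∘ ψ₁` and `L_v = L_{0,v} + L_{1,v}`. -/
theorem statement15 (T : ℝ → ℝ) (a : ℝ) (ψ₀ ψ₁ : ℝ → ℝ) (r : ℕ∞) (c α ε ρ : ℝ)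
    (hT : Hyp T a ψ₀ ψ₁ r c α ε ρ) (v : ℝ → ℝ) (k : ℕ) (hk : (k : ℕ∞) < r)
    (hv : HypV a v k) (ck : ℝ) (h7 : H7 T a ψ₀ ψ₁ v k ck)
    (z : ℂ) (hz : ‖z‖ ≤ 1)
    (f : ℝ → ℂ) (hf : ContDiffOn ℝ k f (Set.Icc 0 1)) (x : ℝ) (hx : x ∈ Set.Ioo (0 : ℝ) 1) :
    Summable (fun n : ℕ => ‖z ^ (n + 1) * Real.exp (indw T a v (phib ψ₀ ψ₁ (n + 1) x)) *
        (f (phib ψ₀ ψ₁ (n + 1) x) -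
          z * Real.exp (v (ψ₀ (phib ψ₀ ψ₁ (n + 1) x))) * f (ψ₀ (phib ψ₀ ψ₁ (n + 1) x)))‖) ∧
    (f x - z * Real.exp (v (ψ₀ x)) * f (ψ₀ x)) -
        ∑' n : ℕ, z ^ (n + 1) * Real.exp (indw T a v (phib ψ₀ ψ₁ (n + 1) x)) *
          (f (phib ψ₀ ψ₁ (n + 1) x) -
            z * Real.exp (v (ψ₀ (phib ψ₀ ψ₁ (n + 1) x))) * f (ψ₀ (phib ψ₀ ψ₁ (n + 1) x)))
      = f x - z * (Real.exp (v (ψ₀ x)) * f (ψ₀ x) + Real.exp (v (ψ₁ x)) * f (ψ₁ x)) := by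
  have hphib : ∀ (n : ℕ) (y : ℝ), phib ψ₀ ψ₁ (n+1) y = ψ₀^[n] (ψ₁ y) := by
    intro n y; simp [phib]
  -- bounds on v
  obtain ⟨v0, hv0, heq0, -⟩ := hv.ext0
  obtain ⟨v1, hv1, heq1⟩ := hv.ext1
  obtain ⟨M0, hM0⟩ := isCompact_Icc.exists_bound_of_continuousOn hv0.continuousOn
  obtain ⟨M1, hM1⟩ := isCompact_Icc.exists_bound_of_continuousOn hv1.continuousOn
  set Mv : ℝ := max M0 M1 with hMv_def
  have hMv0 : ∀ t ∈ Set.Ioo 0 a, |v t| ≤ Mv := by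
    intro t ht
    rw [heq0 ht]
    exact le_trans (by simpa [Real.norm_eq_abs] using hM0 t (Set.Ioo_subset_Icc_self ht))
      (le_max_left _ _)
  have hMv1 : ∀ t ∈ Set.Ioo a 1, |v t| ≤ Mv := by
    intro t ht
    rw [heq1 ht]
    exact le_trans (by simpa [Real.norm_eq_abs] using hM1 t (Set.Ioo_subset_Icc_self ht))
      (le_max_right _ _)
  -- bound on f
  obtain ⟨Mf', hMf'⟩ := isCompact_Icc.exists_bound_of_continuousOn hf.continuousOn
  set Mf : ℝ := max Mf' 0 with hMf_def
  have hMf_nonneg : 0 ≤ Mf := le_max_right _ _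
  have hMf : ∀ t ∈ Set.Icc (0:ℝ) 1, ‖f t‖ ≤ Mf := fun t ht =>
    le_trans (hMf' t ht) (le_max_left _ _)
  -- the weight functions
  set g : ℕ → ℝ → ℝ := fun n y => Real.exp (indw T a v (phib ψ₀ ψ₁ (n+1) y)) with hg
  have hnrm : ∀ n : ℕ, nrm 0 (g n) = sSup ((fun y => ‖g n y‖) '' Set.Ioo (0:ℝ) 1) := by
    intro n
    simp [nrm]
  have hgpos : ∀ (n : ℕ) (y : ℝ), 0 < g n y := fun n y => Real.exp_pos _
  have hgle : ∀ n : ℕ, ∀ y ∈ Set.Ioo (0:ℝ) 1, g n y ≤ Real.exp ((n+1) * Mv) := by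
    intro n y hy
    simp only [hg, hphib]
    exact Real.exp_le_exp.2 (aux_indw_le hT hy hMv0 hMv1 n)
  have hbdd : ∀ n : ℕ, BddAbove ((fun y => ‖g n y‖) '' Set.Ioo (0:ℝ) 1) := by
    intro n
    refine ⟨Real.exp ((n+1) * Mv), ?_⟩
    rintro t ⟨y, hy, rfl⟩
    show ‖g n y‖ ≤ _
    rw [Real.norm_eq_abs, abs_of_pos (hgpos n y)]
    exact hgle n y hy
  have hEle : ∀ n : ℕ, ∀ y ∈ Set.Ioo (0:ℝ) 1, g n y ≤ nrm 0 (g n) := by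
    intro n y hy
    rw [hnrm n]
    calc g n y = ‖g n y‖ := by rw [Real.norm_eq_abs, abs_of_pos (hgpos n y)]
      _ ≤ _ := le_csSup (hbdd n) (Set.mem_image_of_mem _ hy)
  have hnrm_nonneg : ∀ n : ℕ, 0 ≤ nrm 0 (g n) :=
    fun n => le_trans (hgpos n x).le (hEle n x hx)
  -- summability of the weights, from (H7) with h = 0
  obtain ⟨hS, -⟩ := h7 0 (Nat.zero_le k)
  have hSg : Summable (fun n : ℕ => nrm 0 (g n)) := by
    have hS2 : Summable (fun n : ℕ => nrm 0 (g n) * 2) := by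
      refine hS.congr fun n => ?_
      rw [pow_zero, hg]
      norm_num
    have := hS2.div_const 2
    simpa [mul_div_assoc] using this
  -- the terms of the series
  set term : ℕ → ℂ := fun n => z ^ (n + 1) * Real.exp (indw T a v (phib ψ₀ ψ₁ (n + 1) x)) *
      (f (phib ψ₀ ψ₁ (n + 1) x) -
        z * Real.exp (v (ψ₀ (phib ψ₀ ψ₁ (n + 1) x))) * f (ψ₀ (phib ψ₀ ψ₁ (n + 1) x)))
    with hterm_def
  have hzpow : ∀ n : ℕ, ‖z‖ ^ (n+1) ≤ 1 := fun n => pow_le_one₀ (norm_nonneg z) hz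
  have hmem_Icc : ∀ n : ℕ, ψ₀^[n] (ψ₁ x) ∈ Set.Icc (0:ℝ) 1 := fun n =>
    Set.Ioo_subset_Icc_self (aux_mem hT hx n).1
  have hterm_bound : ∀ n : ℕ, ‖term n‖ ≤ nrm 0 (g n) * (Mf + Real.exp Mv * Mf) := by
    intro n
    have hEx : ‖(Real.exp (indw T a v (phib ψ₀ ψ₁ (n+1) x)) : ℂ)‖ ≤ nrm 0 (g n) := by
      rw [Complex.norm_real, Real.norm_eq_abs, abs_of_pos (Real.exp_pos _)]
      exact hEle n x hx
    have hy1 : ψ₀ (phib ψ₀ ψ₁ (n+1) x) ∈ Set.Ioo 0 a := by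
      rw [hphib]
      exact (hT.inv0 _ (aux_mem hT hx n).1).1
    have hy1' : ψ₀ (phib ψ₀ ψ₁ (n+1) x) ∈ Set.Icc (0:ℝ) 1 :=
      ⟨hy1.1.le, (hy1.2.trans hT.ha.2).le⟩
    have hw : ‖f (phib ψ₀ ψ₁ (n + 1) x) -
        z * Real.exp (v (ψ₀ (phib ψ₀ ψ₁ (n + 1) x))) * f (ψ₀ (phib ψ₀ ψ₁ (n + 1) x))‖
        ≤ Mf + Real.exp Mv * Mf := by
      refine le_trans (norm_sub_le _ _) (add_le_add ?_ ?_)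
      · rw [hphib]; exact hMf _ (hmem_Icc n)
      · rw [norm_mul, norm_mul, Complex.norm_real, Real.norm_eq_abs,
          abs_of_pos (Real.exp_pos _)]
        have h1 : Real.exp (v (ψ₀ (phib ψ₀ ψ₁ (n+1) x))) ≤ Real.exp Mv :=
          Real.exp_le_exp.2 (le_trans (le_abs_self _) (hMv0 _ hy1))
        have h2 : ‖f (ψ₀ (phib ψ₀ ψ₁ (n+1) x))‖ ≤ Mf := hMf _ hy1'
        calc ‖z‖ * Real.exp (v (ψ₀ (phib ψ₀ ψ₁ (n+1) x))) * ‖f (ψ₀ (phib ψ₀ ψ₁ (n+1) x))‖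
            ≤ 1 * Real.exp Mv * Mf := by
              refine mul_le_mul (mul_le_mul hz h1 (Real.exp_pos _).le zero_le_one) h2
                (norm_nonneg _) (by positivity)
          _ = Real.exp Mv * Mf := by ring
    calc ‖term n‖ = ‖z‖ ^ (n+1) * ‖(Real.exp (indw T a v (phib ψ₀ ψ₁ (n+1) x)) : ℂ)‖ *
          ‖f (phib ψ₀ ψ₁ (n + 1) x) -
            z * Real.exp (v (ψ₀ (phib ψ₀ ψ₁ (n + 1) x))) * f (ψ₀ (phib ψ₀ ψ₁ (n + 1) x))‖ := by
          rw [hterm_def]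
          simp [norm_mul, norm_pow]
      _ ≤ 1 * nrm 0 (g n) * (Mf + Real.exp Mv * Mf) := by
          refine mul_le_mul (mul_le_mul (hzpow n) hEx (norm_nonneg _) zero_le_one) hw
            (norm_nonneg _) (by rw [one_mul]; exact hnrm_nonneg n)
      _ = nrm 0 (g n) * (Mf + Real.exp Mv * Mf) := by ring
  have hnormsum : Summable (fun n : ℕ => ‖term n‖) :=
    Summable.of_nonneg_of_le (fun n => norm_nonneg _) hterm_bound
      (hSg.mul_right _)
  refine ⟨hnormsum, ?_⟩
  -- the telescoping sequence
  set useq : ℕ → ℂ := fun n =>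
      z ^ (n+1) * Real.exp (indw T a v (ψ₀^[n] (ψ₁ x))) * f (ψ₀^[n] (ψ₁ x)) with huseq_def
  have hterm_eq : ∀ n : ℕ, term n = useq n - useq (n+1) := by
    intro n
    have hrec := aux_indw_rec (v := v) hT hx n
    rw [Function.iterate_succ_apply'] at hrec
    rw [hterm_def, huseq_def]
    simp only [hphib, Function.iterate_succ_apply' ψ₀ n (ψ₁ x)]
    rw [hrec, Real.exp_add]
    push_cast
    ring
  -- useq tends to 0
  have huseq_bound : ∀ n : ℕ, ‖useq n‖ ≤ nrm 0 (g n) * Mf := by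
    intro n
    have hEx : ‖(Real.exp (indw T a v (ψ₀^[n] (ψ₁ x))) : ℂ)‖ ≤ nrm 0 (g n) := by
      rw [Complex.norm_real, Real.norm_eq_abs, abs_of_pos (Real.exp_pos _)]
      simpa only [hg, hphib] using hEle n x hx
    calc ‖useq n‖ = ‖z‖ ^ (n+1) * ‖(Real.exp (indw T a v (ψ₀^[n] (ψ₁ x))) : ℂ)‖ *
          ‖f (ψ₀^[n] (ψ₁ x))‖ := by rw [huseq_def]; simp [norm_mul, norm_pow]
      _ ≤ 1 * nrm 0 (g n) * Mf := by
          refine mul_le_mul (mul_le_mul (hzpow n) hEx (norm_nonneg _) zero_le_one)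
            (hMf _ (hmem_Icc n)) (norm_nonneg _) (by rw [one_mul]; exact hnrm_nonneg n)
      _ = nrm 0 (g n) * Mf := by ring
  have huseq0 : Tendsto useq atTop (𝓝 0) := by
    have hlim : Tendsto (fun n : ℕ => nrm 0 (g n) * Mf) atTop (𝓝 0) := by
      simpa using hSg.tendsto_atTop_zero.mul_const Mf
    exact squeeze_zero_norm huseq_bound hlim
  have hsum : Summable term := hnormsum.of_norm
  have hhs : HasSum term (useq 0) := by
    rw [hsum.hasSum_iff_tendsto_nat]
    have h2 : Tendsto (fun n => useq 0 - useq n) atTop (𝓝 (useq 0)) := by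
      simpa using tendsto_const_nhds.sub huseq0
    refine h2.congr fun n => ?_
    rw [← Finset.sum_range_sub' useq n]
    exact (Finset.sum_congr rfl fun i _ => (hterm_eq i).symm)
  have htsum : (∑' n : ℕ, term n) = useq 0 := hhs.tsum_eq
  rw [htsum, huseq_def]
  simp only [Function.iterate_zero_apply, pow_one, aux_indw0 (v := v) hT hx]
  ring

end
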